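/- An ℝ-linear isometric automorphism f of ℍⁿ belongs to TSp(ℍⁿ) ∩ U(ℍⁿ) if and only if there exist a unit complex number c (i.e. c ∈ ℂ = ℝ ⊕ ℝi ⊆ ℍ with |c| = 1) and g ∈ Sp(ℍⁿ) such that f(v) = c • g(v) for all v ∈ ℍⁿ; in other words, TSp(ℍⁿ) ∩ U(ℍⁿ) = U(1)·Sp(ℍⁿ). -/

import Mathlib

open Quaternion

/-- The embedding of `ℂ = ℝ ⊕ ℝi` into `ℍ`. -/
def cq (z : ℂ) : ℍ := ⟨z.re, z.im, 0, 0⟩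

/-- `ℍⁿ`, the orthogonal direct sum of `n` copies of `ℍ`, as a real inner product space
and left `ℍ`-module. -/
abbrev Hn (n : ℕ) := PiLp 2 (fun _ : Fin n => ℍ)

lemma cq_mul (z w : ℂ) : cq (z * w) = cq z * cq w := by
  ext <;> simp [cq, Complex.mul_re, Complex.mul_im] <;> erw [QuaternionAlgebra.mk_mul_mk] <;> simp <;> ring

lemma cq_one : cq 1 = 1 := by ext <;> simp [cq]

lemma cq_norm (z : ℂ) : ‖cq z‖ = ‖z‖ := by
  rw [norm_eq_sqrt_real_inner, Quaternion.inner_self, Complex.norm_def,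
    Complex.normSq_apply]
  congr 1
  rw [Quaternion.normSq_def']; simp [cq]
  ring

noncomputable def iH : ℍ := ⟨0, 1, 0, 0⟩
noncomputable def jH : ℍ := ⟨0, 0, 1, 0⟩
noncomputable def kH : ℍ := ⟨0, 0, 0, 1⟩

lemma cq_I : cq Complex.I = iH := by ext <;> simp [cq, iH]

lemma quat_decomp (r : ℍ) : r = (r.re : ℍ) + r.imI • iH + r.imJ • jH + r.imK • kH := by
  ext <;> simp [iH, jH, kH] <;> erw [QuaternionAlgebra.smul_mk, QuaternionAlgebra.smul_mk, QuaternionAlgebra.smul_mk] <;> simp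

lemma jH_mul_jH : jH * jH = -1 := by ext <;> simp [jH, Quaternion.ext_iff] <;> erw [QuaternionAlgebra.mk_mul_mk] <;> simp

lemma jH_mul_iH : jH * iH = -(iH * jH) := by ext <;> simp [jH, iH] <;> erw [QuaternionAlgebra.mk_mul_mk, QuaternionAlgebra.mk_mul_mk] <;> simp

lemma kH_eq : kH = iH * jH := by ext <;> simp [iH, jH, kH] <;> erw [QuaternionAlgebra.mk_mul_mk] <;> simp

lemma jH_cq (z : ℂ) : jH * cq z = cq (starRingEnd ℂ z) * jH := by
  ext <;> simp [jH, cq] <;> erw [QuaternionAlgebra.mk_mul_mk, QuaternionAlgebra.mk_mul_mk] <;> simp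

/-- Conjugation by an invertible quaternion, as an `ℝ`-algebra automorphism. -/
noncomputable def conjAlgEquiv (q q' : ℍ) (h1 : q * q' = 1) (h2 : q' * q = 1) : ℍ ≃ₐ[ℝ] ℍ where
  toFun x := q * x * q'
  invFun x := q' * x * q
  left_inv x := by
    show q' * (q * x * q') * q = x
    rw [show q' * (q * x * q') * q = (q' * q) * x * (q' * q) by simp only [mul_assoc], h2,
      one_mul, mul_one]
  right_inv x := by
    show q * (q' * x * q) * q' = x
    rw [show q * (q' * x * q) * q' = (q * q') * x * (q * q') by simp only [mul_assoc], h1,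
      one_mul, mul_one]
  map_mul' x y := by
    show q * (x * y) * q' = (q * x * q') * (q * y * q')
    rw [show q * x * q' * (q * y * q') = q * (x * (q' * q) * y) * q' by simp only [mul_assoc],
      h2, mul_one]
  map_add' x y := by
    show q * (x + y) * q' = q * x * q' + q * y * q'
    noncomm_ring
  commutes' r := by
    show q * algebraMap ℝ ℍ r * q' = algebraMap ℝ ℍ r
    rw [show q * algebraMap ℝ ℍ r = algebraMap ℝ ℍ r * q from (Algebra.commutes r q).symm,
      mul_assoc, h1, mul_one]

lemma conjAlgEquiv_apply (q q' : ℍ) (h1 : q * q' = 1) (h2 : q' * q = 1) (x : ℍ) :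
    conjAlgEquiv q q' h1 h2 x = q * x * q' := rfl

/-- Left scalar multiplication by a unit quaternion, as a real linear isometric automorphism
of `ℍⁿ`. -/
noncomputable def qSmulIso (n : ℕ) (q q' : ℍ) (h1 : q * q' = 1) (h2 : q' * q = 1)
    (hq : ‖q‖ = 1) : Hn n ≃ₗᵢ[ℝ] Hn n where
  toFun v := q • v
  invFun v := q' • v
  left_inv v := by show q' • q • v = v; rw [smul_smul, h2, one_smul]
  right_inv v := by show q • q' • v = v; rw [smul_smul, h1, one_smul]
  map_add' u v := smul_add q u v
  map_smul' r v := smul_comm q r v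
  norm_map' v := by
    show ‖q • v‖ = ‖v‖
    rw [PiLp.norm_eq_sum (by norm_num), PiLp.norm_eq_sum (by norm_num)]
    congr 1
    refine Finset.sum_congr rfl fun i _ => ?_
    have h : (q • v) i = q * v i := rfl
    rw [h, norm_mul, hq, one_mul]

lemma qSmulIso_apply (n : ℕ) (q q' : ℍ) (h1 : q * q' = 1) (h2 : q' * q = 1)
    (hq : ‖q‖ = 1) (v : Hn n) : qSmulIso n q q' h1 h2 hq v = q • v := rfl

lemma unit_mul_conj {c : ℂ} (hc : ‖c‖ = 1) : c * starRingEnd ℂ c = 1 := by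
  rw [Complex.mul_conj]
  norm_cast
  rw [Complex.normSq_eq_norm_sq, hc, one_pow]

/-- An ℝ-linear isometric automorphism `f` of `ℍⁿ` lies in `TSp(ℍⁿ) ∩ U(ℍⁿ)` iff
`f = c • g` for some unit complex number `c` and some `g ∈ Sp(ℍⁿ)`;
that is, `TSp(ℍⁿ) ∩ U(ℍⁿ) = U(1)·Sp(ℍⁿ)`. -/
theorem mem_TSp_inter_U_iff (n : ℕ) (f : Hn n ≃ₗᵢ[ℝ] Hn n) :
    ((∃ κ : ℍ ≃ₐ[ℝ] ℍ, ∀ (r : ℍ) (v : Hn n), f (r • v) = κ r • f v) ∧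
      (∀ (z : ℂ) (v : Hn n), f (cq z • v) = cq z • f v)) ↔
    ∃ (c : ℂ) (g : Hn n ≃ₗᵢ[ℝ] Hn n),
      ‖c‖ = 1 ∧ (∀ (r : ℍ) (v : Hn n), g (r • v) = r • g v) ∧
      ∀ v : Hn n, f v = cq c • g v := by
  constructor
  · rintro ⟨⟨κ, hκ⟩, hC⟩
    rcases Nat.eq_zero_or_pos n with hn | hn
    · subst hn
      have hz : ∀ v : Hn 0, v = 0 := fun v => PiLp.ext fun i => i.elim0
      refine ⟨1, f, by norm_num, fun r v => ?_, fun v => ?_⟩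
      · rw [hz (r • v), hz v, map_zero, smul_zero]
      · rw [hz v, map_zero, smul_zero]
    · -- `κ` fixes the copy of `ℂ` inside `ℍ`
      set i0 : Fin n := ⟨0, hn⟩
      set v₀ : Hn n := WithLp.toLp 2 (fun _ => 1) with hv₀def
      have key : ∀ z : ℂ, κ (cq z) = cq z := by
        intro z
        have h1 := hκ (cq z) (f.symm v₀)
        have h2 := hC z (f.symm v₀)
        rw [f.apply_symm_apply] at h1 h2
        have h3 : κ (cq z) • v₀ = cq z • v₀ := by rw [← h1, h2]
        have h4 : κ (cq z) * 1 = cq z * 1 := congrArg (fun x : Hn n => x i0) h3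
        simpa using h4
      have hκi : κ iH = iH := by rw [← cq_I]; exact key Complex.I
      set u := κ jH with hu
      have hu2 : u * u = -1 := by rw [hu, ← map_mul, jH_mul_jH, map_neg, map_one]
      have hanti : u * iH = -(iH * u) := by
        have h := congrArg κ jH_mul_iH
        rw [map_mul, map_neg, map_mul, hκi] at h
        exact h
      have hreim : u.re = 0 ∧ u.imI = 0 := by
        rw [Quaternion.ext_iff] at hanti
        simp at hanti; simp [iH] at hanti
        exact ⟨by linarith [hanti.1], by linarith [hanti.2]⟩
      have hcd : u.imJ * u.imJ + u.imK * u.imK = 1 := by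
        rw [Quaternion.ext_iff] at hu2
        simp [hreim.1, hreim.2] at hu2
        linarith [hu2.1]
      set zc : ℂ := ⟨u.imJ, u.imK⟩ with hzc
      obtain ⟨w, hw⟩ := IsAlgClosed.exists_pow_nat_eq zc (n := 2) zero_lt_two
      have hzcnorm : ‖zc‖ = 1 := by
        rw [Complex.norm_def, Complex.normSq_apply]
        show Real.sqrt (u.imJ * u.imJ + u.imK * u.imK) = 1
        rw [hcd, Real.sqrt_one]
      have hwnorm : ‖w‖ = 1 := by
        have h2 : ‖w‖ ^ 2 = 1 := by rw [← norm_pow, hw, hzcnorm]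
        calc ‖w‖ = Real.sqrt (‖w‖ ^ 2) := (Real.sqrt_sq (norm_nonneg w)).symm
          _ = 1 := by rw [h2, Real.sqrt_one]
      set w' := starRingEnd ℂ w with hw'def
      have hcc : w * w' = 1 := unit_mul_conj hwnorm
      have hq1 : cq w * cq w' = 1 := by rw [← cq_mul, hcc, cq_one]
      have hq2 : cq w' * cq w = 1 := by rw [← cq_mul, mul_comm, hcc, cq_one]
      have hicomm : iH * cq w = cq w * iH := by
        rw [← cq_I, ← cq_mul, ← cq_mul, mul_comm]
      have hu_eq : u = cq zc * jH := by
        ext <;> simp only [Quaternion.re_mul, Quaternion.imI_mul, Quaternion.imJ_mul, Quaternion.imK_mul] <;> simp [cq, jH, hzc, hreim.1, hreim.2]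
      have hzw : zc * w' = w := by
        rw [← hw, pow_two, mul_assoc, hcc, mul_one]
      have hj : u * cq w = cq w * jH := by
        rw [hu_eq, mul_assoc, jH_cq w, ← hw'def, ← mul_assoc, ← cq_mul, hzw]
      have hk : iH * u * cq w = cq w * kH := by
        rw [mul_assoc, hj, ← mul_assoc, hicomm, mul_assoc, ← kH_eq]
      have hcoe : ∀ a : ℝ, κ (a : ℍ) = (a : ℍ) := fun a => by
        rw [show ((a : ℝ) : ℍ) = algebraMap ℝ ℍ a from rfl]
        exact κ.commutes a
      have hκk : κ kH = iH * u := by rw [kH_eq, map_mul, hκi, hu]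
      have hmain : ∀ r : ℍ, κ r * cq w = cq w * r := by
        intro r
        conv_lhs => rw [quat_decomp r]
        conv_rhs => rw [quat_decomp r]
        rw [map_add, map_add, map_add, map_smul, map_smul, map_smul, hcoe, hκi, hκk, ← hu]
        simp only [add_mul, mul_add, smul_mul_assoc, mul_smul_comm]
        rw [hicomm, hj, hk, Quaternion.coe_commutes]
      have hw'norm : ‖cq w'‖ = 1 := by
        rw [cq_norm, hw'def, RCLike.norm_conj, hwnorm]
      refine ⟨w, f.trans (qSmulIso n (cq w') (cq w) hq2 hq1 hw'norm), hwnorm, fun r v => ?_,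
        fun v => ?_⟩
      · show cq w' • f (r • v) = r • (cq w' • f v)
        rw [hκ, smul_smul, smul_smul]
        congr 1
        calc cq w' * κ r = cq w' * κ r * (cq w * cq w') := by rw [hq1, mul_one]
          _ = cq w' * (κ r * cq w) * cq w' := by simp only [mul_assoc]
          _ = cq w' * (cq w * r) * cq w' := by rw [hmain r]
          _ = (cq w' * cq w) * (r * cq w') := by simp only [mul_assoc]
          _ = r * cq w' := by rw [hq2, one_mul]
      · show f v = cq w • (cq w' • f v)
        rw [smul_smul, hq1, one_smul]
  · rintro ⟨c, g, hc, hg, hfg⟩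
    have hcc : c * starRingEnd ℂ c = 1 := unit_mul_conj hc
    have hq1 : cq c * cq (starRingEnd ℂ c) = 1 := by rw [← cq_mul, hcc, cq_one]
    have hq2 : cq (starRingEnd ℂ c) * cq c = 1 := by rw [← cq_mul, mul_comm, hcc, cq_one]
    refine ⟨⟨conjAlgEquiv (cq c) (cq (starRingEnd ℂ c)) hq1 hq2, fun r v => ?_⟩, fun z v => ?_⟩
    · rw [conjAlgEquiv_apply, hfg (r • v), hg, hfg v, smul_smul, smul_smul]
      congr 1
      rw [mul_assoc (cq c * r), hq2, mul_one]
    · rw [hfg (cq z • v), hg, hfg v, smul_smul, smul_smul, ← cq_mul, ← cq_mul, mul_comm c z]
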